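/- Let α > 0, t > 0, and let θ be a character of G of level N ≥ 1. Then z ↦ θ(z)·G_α(t,z) is μ-integrable on G and ∫_G θ(z)·G_α(t,z) dμ(z) = e^{−t·q^{α·N·m_N}}. -/

import Mathlib

open MeasureTheory Filter Topology

/-- A (unitary) continuous character of a topological group, with values in `ℂ`. -/
def UnitaryCharacter (G : Type*) [Group G] [TopologicalSpace G] :=
  {θ : G → ℂ // Continuous θ ∧ (∀ a b : G, θ (a * b) = θ a * θ b) ∧
    ∀ a : G, ‖θ a‖ = 1}

/-- for `α > 0`, `t > 0` and a character `θ` of level `N ≥ 1`,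
`z ↦ θ(z) G_α(t,z)` is `μ`-integrable and
`∫_G θ(z) G_α(t,z) dμ(z) = e^{−t q^{α N m_N}}`. -/
theorem stmt7
    (q : ℕ) (hq : 2 ≤ q)
    (m : ℕ → ℕ) (hm0 : m 0 = 0) (hm1 : m 1 = 1)
    (hmgrow : ∀ n : ℕ, 1 ≤ n → 2 * m n ≤ m (n + 1))
    (G : Type*) [CommGroup G] [TopologicalSpace G] [IsTopologicalGroup G]
    [CompactSpace G] [MeasurableSpace G] [BorelSpace G]
    (μ : Measure G) [μ.IsHaarMeasure] [IsProbabilityMeasure μ]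
    (V : ℕ → Subgroup G) (hVopen : ∀ n, IsOpen (V n : Set G))
    (hV0 : V 0 = ⊤) (hVdesc : ∀ n, V (n + 1) ≤ V n)
    (hVmeas : ∀ n, μ (V n : Set G) = ((q : ENNReal) ^ (n * m n))⁻¹)
    (α t : ℝ) (hα : 0 < α) (ht : 0 < t)
    (φ : ℕ → ℝ) (hφ0 : φ 0 = 0)
    (hφ : ∀ n : ℕ, 1 ≤ n → φ n = (q : ℝ) ^ (α * ((n * m n : ℕ) : ℝ)))
    (K : G → ℝ)
    (hK : ∀ l : ℕ, ∀ z ∈ (V l : Set G) \ (V (l + 1) : Set G),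
      K z = ∑ n ∈ Finset.range (l + 1),
        (Real.exp (-(t * φ n)) - Real.exp (-(t * φ (n + 1)))) * (q : ℝ) ^ (n * m n))
    (hK0 : ∀ z ∈ ⋂ n : ℕ, (V n : Set G), K z = 0)
    (θ : UnitaryCharacter G) (N : ℕ) (hN : 1 ≤ N)
    (hθtriv : ∀ y ∈ (V N : Set G), θ.1 y = 1)
    (hθnontriv : ∃ y ∈ (V (N - 1) : Set G), θ.1 y ≠ 1) :
    Integrable (fun z : G => θ.1 z * (K z : ℂ)) μ ∧
    ∫ z : G, θ.1 z * (K z : ℂ) ∂μ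
      = ((Real.exp (-(t * (q : ℝ) ^ (α * ((N * m N : ℕ) : ℝ)))) : ℝ) : ℂ) := by
  classical
  have θcont : Continuous θ.1 := θ.2.1
  have θmul : ∀ a b : G, θ.1 (a * b) = θ.1 a * θ.1 b := θ.2.2.1
  have θnorm : ∀ z : G, ‖θ.1 z‖ = 1 := fun z => by
    exact θ.2.2.2 z
  have hq0 : (0:ℝ) < (q:ℝ) := by positivity
  have hq1 : (1:ℝ) < (q:ℝ) := by exact_mod_cast hq.trans_lt' one_lt_two
  -- basic facts about m and n * m n
  have mpos : ∀ n, 1 ≤ n → 1 ≤ m n := by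
    intro n
    induction n with
    | zero => exact fun h => absurd h (by norm_num)
    | succ k ih =>
      intro _
      rcases Nat.eq_zero_or_pos k with h | h
      · subst h; simpa using hm1.ge
      · have h1 := hmgrow k h
        have h2 := ih h
        omega
  have nmmono : ∀ j k, j ≤ k → j * m j ≤ k * m k := by
    have step : ∀ n, n * m n ≤ (n + 1) * m (n + 1) := by
      intro n
      rcases Nat.eq_zero_or_pos n with h | h
      · simp [h]
      · have h1 := hmgrow n h
        nlinarith [Nat.zero_le (m n)]
    exact fun j k hjk => monotone_nat_of_le_succ step hjk
  have gap : ∀ M, M * m M + (M + 1) ≤ (M + 1) * m (M + 1) := by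
    intro M
    rcases Nat.eq_zero_or_pos M with h | h
    · subst h; simp [hm0, hm1]
    · have h1 := hmgrow M h
      have h2 := mpos M h
      nlinarith
  -- φ facts
  have φnonneg : ∀ n, 0 ≤ φ n := by
    intro n
    rcases Nat.eq_zero_or_pos n with h | h
    · subst h; simp [hφ0]
    · rw [hφ n h]; positivity
  have φmono : ∀ n, φ n ≤ φ (n + 1) := by
    intro n
    rcases Nat.eq_zero_or_pos n with h | h
    · subst h
      rw [hφ0, hφ 1 le_rfl]; positivity
    · rw [hφ n h, hφ (n + 1) (by omega)]
      apply Real.rpow_le_rpow_of_exponent_le hq1.le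
      have h2 : ((n * m n : ℕ) : ℝ) ≤ (((n + 1) * m (n + 1) : ℕ) : ℝ) := by
        exact_mod_cast nmmono n (n + 1) (Nat.le_succ n)
      nlinarith
  have expmono : ∀ n, Real.exp (-(t * φ (n + 1))) ≤ Real.exp (-(t * φ n)) := by
    intro n
    apply Real.exp_le_exp.2
    have := φmono n
    nlinarith
  have expone : ∀ n, Real.exp (-(t * φ n)) ≤ 1 := by
    intro n
    rw [show (1:ℝ) = Real.exp 0 by simp]
    apply Real.exp_le_exp.2
    have := φnonneg n
    nlinarith
  -- the building blocks
  set bb : ℕ → ℝ := fun n =>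
    (Real.exp (-(t * φ n)) - Real.exp (-(t * φ (n + 1)))) * (q : ℝ) ^ (n * m n) with hbb
  set S : ℕ → ℝ := fun l => ∑ n ∈ Finset.range (l + 1), bb n with hSdef
  set a : ℕ → ℝ := fun l => ((q : ℝ) ^ (l * m l))⁻¹ with hadef
  set A : ℕ → Set G := fun l => (V l : Set G) \ (V (l + 1) : Set G) with hAdef
  have bbnonneg : ∀ n, 0 ≤ bb n := by
    intro n
    apply mul_nonneg
    · have := expmono n; linarith
    · positivity
  have Snonneg : ∀ l, 0 ≤ S l := fun l => Finset.sum_nonneg fun n _ => bbnonneg n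
  have Ssucc : ∀ l, S (l + 1) = S l + bb (l + 1) := fun l => Finset.sum_range_succ _ _
  have anonneg : ∀ l, 0 ≤ a l := fun l => by rw [hadef]; positivity
  have apos : ∀ l, 0 < a l := fun l => by rw [hadef]; positivity
  have hba : ∀ n, bb n * a n = Real.exp (-(t * φ n)) - Real.exp (-(t * φ (n + 1))) := by
    intro n
    rw [hbb, hadef]
    have : ((q:ℝ) ^ (n * m n)) ≠ 0 := by positivity
    field_simp
  have a0 : a 0 = 1 := by rw [hadef]; simp [hm0]
  have aanti : ∀ j k, j ≤ k → a k ≤ a j := by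
    intro j k hjk
    rw [hadef]
    apply inv_anti₀
    · positivity
    · exact pow_le_pow_right₀ hq1.le (nmmono j k hjk)
  -- V facts
  have hVanti : ∀ j k, j ≤ k → (V k : Set G) ⊆ (V j : Set G) := by
    intro j k hjk
    exact_mod_cast antitone_nat_of_succ_le hVdesc hjk
  have hVmeasSet : ∀ l, MeasurableSet (V l : Set G) := fun l => (hVopen l).measurableSet
  have hAmeas : ∀ l, MeasurableSet (A l) := fun l =>
    (hVmeasSet l).diff (hVmeasSet (l + 1))
  have hVfin : ∀ l, μ (V l : Set G) ≠ ⊤ := fun l => measure_ne_top μ _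
  have haval : ∀ l, (μ (V l : Set G)).toReal = a l := by
    intro l
    rw [hVmeas l, hadef, ENNReal.toReal_inv, ENNReal.toReal_pow, ENNReal.toReal_natCast]
  have hmuA : ∀ l, μ (A l) = ENNReal.ofReal (a l - a (l + 1)) := by
    intro l
    have hsub : (V (l+1) : Set G) ⊆ (V l : Set G) := hVanti l (l+1) (Nat.le_succ l)
    have hd : μ (A l) = μ (V l : Set G) - μ (V (l+1) : Set G) := by
      rw [hAdef]
      exact measure_diff hsub (hVmeasSet (l+1)).nullMeasurableSet (hVfin (l+1))
    rw [hd, ← haval, ← haval,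
      ← ENNReal.toReal_sub_of_le (measure_mono hsub) (hVfin l),
      ENNReal.ofReal_toReal (ENNReal.sub_ne_top (hVfin l))]
  -- pointwise structure of K
  have hKS : ∀ l, ∀ z ∈ A l, K z = S l := by
    intro l z hz
    rw [hSdef]
    exact hK l z hz
  have huniq : ∀ z l k, z ∈ A l → z ∈ A k → l = k := by
    intro z l k hl hk
    obtain ⟨hl1, hl2⟩ : z ∈ (V l : Set G) \ (V (l+1) : Set G) := hl
    obtain ⟨hk1, hk2⟩ : z ∈ (V k : Set G) \ (V (k+1) : Set G) := hk
    by_contra hne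
    rcases lt_or_gt_of_ne hne with h | h
    · exact hl2 (hVanti (l+1) k h hk1)
    · exact hk2 (hVanti (k+1) l h hl1)
  have hcover : ∀ z : G, (z ∈ ⋂ n : ℕ, (V n : Set G)) ∨ ∃ l, z ∈ A l := by
    intro z
    by_cases hz : z ∈ ⋂ n : ℕ, (V n : Set G)
    · exact Or.inl hz
    · right
      have hex : ∃ n, z ∉ (V n : Set G) := by
        simpa [Set.mem_iInter] using hz
      have hn0 : z ∉ (V (Nat.find hex) : Set G) := Nat.find_spec hex
      have hpos : Nat.find hex ≠ 0 := by
        intro h0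
        apply hn0
        rw [h0, hV0]
        simp
      obtain ⟨l, hl⟩ : ∃ l, Nat.find hex = l + 1 := ⟨Nat.find hex - 1, by omega⟩
      refine ⟨l, ?_, ?_⟩
      · have := Nat.find_min hex (show l < Nat.find hex by omega)
        exact not_not.1 this
      · rw [← hl]; exact hn0
  -- partial sums approximating K
  set g : ℕ → G → ℝ := fun L z => ∑ l ∈ Finset.range L, (A l).indicator (fun _ => S l) z with hgdef
  have gmeas : ∀ L, Measurable (g L) := by
    intro L
    apply Finset.measurable_sum
    intro l _
    exact measurable_const.indicator (hAmeas l)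
  have gz_inter : ∀ z ∈ ⋂ n : ℕ, (V n : Set G), ∀ L, g L z = 0 := by
    intro z hz L
    rw [hgdef]
    apply Finset.sum_eq_zero
    intro l _
    apply Set.indicator_of_notMem
    intro hzl
    exact hzl.2 (Set.mem_iInter.1 hz (l+1))
  have gz_A : ∀ z l, z ∈ A l → ∀ L, l < L → g L z = S l := by
    intro z l hzl L hL
    rw [hgdef]
    simp only
    rw [Finset.sum_eq_single_of_mem l (Finset.mem_range.2 hL)]
    · exact Set.indicator_of_mem hzl _
    · intro k _ hkl
      apply Set.indicator_of_notMem
      intro hzk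
      exact hkl (huniq z k l hzk hzl)
  have gtend : ∀ z, Tendsto (fun L => g L z) atTop (𝓝 (K z)) := by
    intro z
    rcases hcover z with hz | ⟨l, hzl⟩
    · rw [hK0 z hz]
      exact tendsto_atTop_of_eventually_const (i₀ := 0) fun L _ => gz_inter z hz L
    · rw [hKS l z hzl]
      exact tendsto_atTop_of_eventually_const (i₀ := l + 1) fun L hL => gz_A z l hzl L hL
  have Kmeas : Measurable K :=
    measurable_of_tendsto_metrizable gmeas (tendsto_pi_nhds.2 gtend)
  have Knonneg : ∀ z, 0 ≤ K z := by
    intro z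
    rcases hcover z with hz | ⟨l, hzl⟩
    · rw [hK0 z hz]
    · rw [hKS l z hzl]; exact Snonneg l
  have gnonneg : ∀ L z, 0 ≤ g L z := by
    intro L z
    rw [hgdef]
    exact Finset.sum_nonneg fun l _ => Set.indicator_nonneg (fun _ _ => Snonneg l) z
  have gmono : ∀ z, Monotone fun L => g L z := by
    intro z
    apply monotone_nat_of_le_succ
    intro L
    rw [hgdef]
    simp only
    rw [Finset.sum_range_succ]
    have h0 : 0 ≤ (A L).indicator (fun _ => S L) z := Set.indicator_nonneg (fun _ _ => Snonneg L) z
    linarith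
  have gKle : ∀ L z, g L z ≤ K z := fun L z =>
    ge_of_tendsto (gtend z) (eventually_atTop.2 ⟨L, fun M hM => gmono z hM⟩)
  -- partial sum identity (integrability)
  have idA : ∀ L, 1 ≤ L → ∑ l ∈ Finset.range L, S l * (a l - a (l+1))
      = 1 - Real.exp (-(t * φ L)) - S (L-1) * a L := by
    intro L
    induction L with
    | zero => exact fun h => absurd h (by norm_num)
    | succ M ih =>
      intro _
      rcases Nat.eq_zero_or_pos M with h | h
      · subst h
        rw [Finset.sum_range_one]
        have hS0 : S 0 = bb 0 := Finset.sum_range_one _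
        have hb0 := hba 0
        have h0 : Real.exp (-(t * φ 0)) = 1 := by rw [hφ0]; simp
        rw [h0] at hb0
        simp only [Nat.sub_self]
        rw [a0] at hb0 ⊢
        linear_combination hb0 + hS0
      · rw [Finset.sum_range_succ, ih h]
        have h1 : M - 1 + 1 = M := by omega
        have hSM : S M = S (M-1) + bb M := by
          have h2 := Ssucc (M-1); rwa [h1] at h2
        simp only [Nat.add_sub_cancel]
        linear_combination a M * hSM + hba M
  have sumA_le_one : ∀ L, ∑ l ∈ Finset.range L, S l * (a l - a (l+1)) ≤ 1 := by
    intro L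
    rcases Nat.eq_zero_or_pos L with h | h
    · subst h; simp
    · rw [idA L h]
      have h1 := Real.exp_pos (-(t * φ L))
      have h2 := mul_nonneg (Snonneg (L-1)) (anonneg L)
      linarith
  -- lintegral bound
  have hΔ : ∀ l, 0 ≤ a l - a (l + 1) := fun l => sub_nonneg.2 (aanti l (l+1) (Nat.le_succ l))
  have glint : ∀ L, ∫⁻ z, ENNReal.ofReal (g L z) ∂μ
      = ENNReal.ofReal (∑ l ∈ Finset.range L, S l * (a l - a (l+1))) := by
    intro L
    have hpt : ∀ z, ENNReal.ofReal (g L z)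
        = ∑ l ∈ Finset.range L, (A l).indicator (fun _ => ENNReal.ofReal (S l)) z := by
      intro z
      rw [hgdef]
      simp only
      rw [ENNReal.ofReal_sum_of_nonneg (fun l _ => Set.indicator_nonneg (fun _ _ => Snonneg l) z)]
      refine Finset.sum_congr rfl fun l _ => ?_
      by_cases hz : z ∈ A l
      · simp [Set.indicator_of_mem hz]
      · simp [Set.indicator_of_notMem hz]
    simp_rw [hpt]
    rw [lintegral_finset_sum _ (fun l _ => measurable_const.indicator (hAmeas l))]
    have hterm : ∀ l, ∫⁻ z, (A l).indicator (fun _ => ENNReal.ofReal (S l)) z ∂μ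
        = ENNReal.ofReal (S l * (a l - a (l+1))) := by
      intro l
      rw [lintegral_indicator (hAmeas l), setLIntegral_const, hmuA l,
        ← ENNReal.ofReal_mul (Snonneg l)]
    simp_rw [hterm]
    rw [← ENNReal.ofReal_sum_of_nonneg (fun l _ => mul_nonneg (Snonneg l) (hΔ l))]
  have Klint : ∫⁻ z, ENNReal.ofReal (K z) ∂μ ≤ 1 := by
    have hsup : ∀ z, ENNReal.ofReal (K z) = ⨆ L, ENNReal.ofReal (g L z) := by
      intro z
      have hmono : Monotone fun L => ENNReal.ofReal (g L z) :=
        fun i j hij => ENNReal.ofReal_le_ofReal (gmono z hij)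
      have htd : Tendsto (fun L => ENNReal.ofReal (g L z)) atTop (𝓝 (ENNReal.ofReal (K z))) :=
        (ENNReal.continuous_ofReal.tendsto _).comp (gtend z)
      exact tendsto_nhds_unique htd (tendsto_atTop_iSup hmono)
    calc ∫⁻ z, ENNReal.ofReal (K z) ∂μ
        = ⨆ L, ∫⁻ z, ENNReal.ofReal (g L z) ∂μ := by
          simp_rw [hsup]
          exact lintegral_iSup (fun L => ENNReal.continuous_ofReal.measurable.comp (gmeas L))
            (fun i j hij z => ENNReal.ofReal_le_ofReal (gmono z hij))
      _ ≤ 1 := by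
          apply iSup_le
          intro L
          rw [glint L]
          exact ENNReal.ofReal_le_one.2 (sumA_le_one L)
  have hKint : Integrable K μ := by
    refine ⟨Kmeas.aestronglyMeasurable, ?_⟩
    have hnn : ∀ z, ‖K z‖ₑ = ENNReal.ofReal (K z) :=
      fun z => Real.enorm_eq_ofReal (Knonneg z)
    simp only [HasFiniteIntegral, hnn]
    exact lt_of_le_of_lt Klint ENNReal.one_lt_top
  have hint : Integrable (fun z : G => θ.1 z * (K z : ℂ)) μ := by
    refine hKint.mono'
      ((θcont.measurable.mul (Complex.measurable_ofReal.comp Kmeas)).aestronglyMeasurable) ?_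
    filter_upwards with z
    rw [norm_mul, θnorm z, one_mul, Complex.norm_real, Real.norm_eq_abs,
      abs_of_nonneg (Knonneg z)]
  -- character integrals over the subgroups
  have θint : Integrable θ.1 μ := by
    refine (integrable_const (1:ℝ)).mono' θcont.measurable.aestronglyMeasurable ?_
    filter_upwards with z
    rw [θnorm z]
  have Jsub0 : ∀ l, l < N → ∫ z, (V l : Set G).indicator θ.1 z ∂μ = 0 := by
    intro l hl
    obtain ⟨y, hy, hyne⟩ := hθnontriv
    have hyVl : y ∈ V l := hVanti l (N-1) (by omega) hy
    have key : ∫ z, (V l : Set G).indicator θ.1 z ∂μ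
        = θ.1 y * ∫ z, (V l : Set G).indicator θ.1 z ∂μ := by
      conv_lhs => rw [← MeasureTheory.integral_mul_left_eq_self ((V l : Set G).indicator θ.1) y]
      rw [← integral_const_mul]
      refine integral_congr_ae (Eventually.of_forall fun z => ?_)
      show (V l : Set G).indicator θ.1 (y * z) = θ.1 y * (V l : Set G).indicator θ.1 z
      by_cases hz : z ∈ V l
      · have hmem : y * z ∈ V l := mul_mem hyVl hz
        rw [Set.indicator_of_mem hmem, Set.indicator_of_mem hz, θmul]
      · have hmem : y * z ∉ (V l : Set G) := by
          intro hmem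
          apply hz
          have h2 : y⁻¹ * (y * z) ∈ V l := mul_mem (inv_mem hyVl) hmem
          simpa [inv_mul_cancel_left] using h2
        rw [Set.indicator_of_notMem hmem, Set.indicator_of_notMem hz, mul_zero]
    have h2 : (θ.1 y - 1) * ∫ z, (V l : Set G).indicator θ.1 z ∂μ = 0 := by
      rw [sub_mul, one_mul, ← key, sub_self]
    rcases mul_eq_zero.1 h2 with h | h
    · exact absurd (sub_eq_zero.1 h) hyne
    · exact h
  have Jsuba : ∀ l, N ≤ l → ∫ z, (V l : Set G).indicator θ.1 z ∂μ = ((a l : ℝ) : ℂ) := by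
    intro l hl
    have h1 : (V l : Set G).indicator θ.1 = (V l : Set G).indicator (fun _ => (1:ℂ)) := by
      funext z
      by_cases hz : z ∈ (V l : Set G)
      · rw [Set.indicator_of_mem hz, Set.indicator_of_mem hz]
        exact hθtriv z (hVanti N l hl hz)
      · rw [Set.indicator_of_notMem hz, Set.indicator_of_notMem hz]
    rw [h1, integral_indicator_const (1:ℂ) (hVmeasSet l), measureReal_def, haval l]
    simp
  have Jdiff : ∀ l, ∫ z, (A l).indicator θ.1 z ∂μ
      = (∫ z, (V l : Set G).indicator θ.1 z ∂μ)
        - ∫ z, (V (l+1) : Set G).indicator θ.1 z ∂μ := by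
    intro l
    have hsub : (V (l+1) : Set G) ⊆ (V l : Set G) := hVanti l (l+1) (Nat.le_succ l)
    have hdiff : ∀ z, (A l).indicator θ.1 z
        = (V l : Set G).indicator θ.1 z - (V (l+1) : Set G).indicator θ.1 z := by
      intro z
      have h2 := Set.indicator_sdiff hsub θ.1
      have h3 : (A l).indicator θ.1
          = (V l : Set G).indicator θ.1 - (V (l+1) : Set G).indicator θ.1 := h2
      rw [h3, Pi.sub_apply]
    simp_rw [hdiff]
    exact integral_sub (θint.indicator (hVmeasSet l)) (θint.indicator (hVmeasSet (l+1)))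
  set I : ℕ → ℝ := fun l => if l < N then 0 else a l with hIdef
  have Jval : ∀ l, ∫ z, (A l).indicator θ.1 z ∂μ = ((I l - I (l+1) : ℝ) : ℂ) := by
    intro l
    rw [Jdiff l, hIdef]
    simp only
    by_cases h1 : l < N
    · by_cases h2 : l + 1 < N
      · rw [Jsub0 l h1, Jsub0 (l+1) h2, if_pos h1, if_pos h2]
        simp
      · rw [Jsub0 l h1, Jsuba (l+1) (by omega), if_pos h1, if_neg h2]
        push_cast
        ring
    · rw [Jsuba l (by omega), Jsuba (l+1) (by omega), if_neg h1,
        if_neg (show ¬(l+1 < N) by omega)]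
      push_cast
      ring
  set c : ℕ → ℝ := fun l => S l * (I l - I (l+1)) with hcdef
  have intFL : ∀ L, ∫ z, θ.1 z * (g L z : ℂ) ∂μ
      = ((∑ l ∈ Finset.range L, c l : ℝ) : ℂ) := by
    intro L
    have hpt : ∀ z, θ.1 z * (g L z : ℂ)
        = ∑ l ∈ Finset.range L, (S l : ℂ) * (A l).indicator θ.1 z := by
      intro z
      rw [hgdef]
      simp only
      rw [Complex.ofReal_sum, Finset.mul_sum]
      refine Finset.sum_congr rfl fun l _ => ?_
      by_cases hz : z ∈ A l
      · rw [Set.indicator_of_mem hz, Set.indicator_of_mem hz]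
        ring
      · rw [Set.indicator_of_notMem hz, Set.indicator_of_notMem hz]
        simp
    calc ∫ z, θ.1 z * (g L z : ℂ) ∂μ
        = ∑ l ∈ Finset.range L, ∫ z, (S l : ℂ) * (A l).indicator θ.1 z ∂μ := by
          simp_rw [hpt]
          exact integral_finset_sum _ fun l _ =>
            ((θint.indicator (hAmeas l)).const_mul _)
      _ = ∑ l ∈ Finset.range L, (S l : ℂ) * ((I l - I (l+1) : ℝ) : ℂ) := by
          refine Finset.sum_congr rfl fun l _ => ?_
          rw [integral_const_mul, Jval l]
      _ = ((∑ l ∈ Finset.range L, c l : ℝ) : ℂ) := by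
          rw [hcdef]
          push_cast
          ring
  have hDCT : Tendsto (fun L => ∫ z, θ.1 z * (g L z : ℂ) ∂μ) atTop
      (𝓝 (∫ z, θ.1 z * (K z : ℂ) ∂μ)) := by
    apply tendsto_integral_filter_of_dominated_convergence K
    · exact Eventually.of_forall fun L =>
        ((θcont.measurable.mul (Complex.measurable_ofReal.comp (gmeas L))).aestronglyMeasurable)
    · refine Eventually.of_forall fun L => Eventually.of_forall fun z => ?_
      rw [norm_mul, θnorm z, one_mul, Complex.norm_real, Real.norm_eq_abs,
        abs_of_nonneg (gnonneg L z)]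
      exact gKle L z
    · exact hKint
    · exact Eventually.of_forall fun z =>
        ((Complex.continuous_ofReal.tendsto _).comp (gtend z)).const_mul (θ.1 z)
  -- partial sum identity for the character integral
  have idB : ∀ L, N ≤ L → ∑ l ∈ Finset.range L, c l
      = Real.exp (-(t * φ N)) - Real.exp (-(t * φ L)) - S (L-1) * a L := by
    intro L
    induction L with
    | zero => intro h; omega
    | succ M ih =>
      intro hL
      rcases Nat.lt_or_ge M N with h | h
      · have hMN : N = M + 1 := by omega
        subst hMN
        rw [Finset.sum_range_succ]
        have hzero : ∑ l ∈ Finset.range M, c l = 0 := by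
          apply Finset.sum_eq_zero
          intro l hl
          have hlM := Finset.mem_range.1 hl
          rw [hcdef]
          simp only
          rw [hIdef]
          simp only [if_pos (show l < M + 1 by omega), if_pos (show l + 1 < M + 1 by omega)]
          simp
        rw [hzero, zero_add, hcdef]
        simp only
        rw [hIdef]
        simp only [if_pos (show M < M + 1 by omega), if_neg (show ¬(M + 1 < M + 1) by omega),
          Nat.add_sub_cancel]
        ring
      · rw [Finset.sum_range_succ, ih h, hcdef]
        simp only
        rw [hIdef]
        simp only [if_neg (show ¬(M < N) by omega), if_neg (show ¬(M + 1 < N) by omega),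
          Nat.add_sub_cancel]
        have hM1 : 1 ≤ M := le_trans hN h
        have h1 : M - 1 + 1 = M := by omega
        have hSM : S M = S (M-1) + bb M := by
          have h2 := Ssucc (M-1); rwa [h1] at h2
        linear_combination a M * hSM + hba M
  -- limits
  have hrgt1 : 1 < (q:ℝ) ^ α := by
    rw [Real.one_lt_rpow_iff_of_pos hq0]
    exact Or.inl ⟨hq1, hα⟩
  have hexp0 : Tendsto (fun L => Real.exp (-(t * φ L))) atTop (𝓝 0) := by
    have h1 : Tendsto (fun L : ℕ => t * ((q:ℝ)^α)^L) atTop atTop :=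
      (tendsto_pow_atTop_atTop_of_one_lt hrgt1).const_mul_atTop ht
    have h2 : Tendsto (fun L : ℕ => Real.exp (-(t * ((q:ℝ)^α)^L))) atTop (𝓝 0) :=
      Real.tendsto_exp_atBot.comp (tendsto_neg_atTop_atBot.comp h1)
    refine tendsto_of_tendsto_of_tendsto_of_le_of_le' tendsto_const_nhds h2 ?_ ?_
    · filter_upwards with L
      exact (Real.exp_pos _).le
    · filter_upwards [eventually_ge_atTop 1] with L hL
      apply Real.exp_le_exp.2
      rw [neg_le_neg_iff]
      apply mul_le_mul_of_nonneg_left ?_ ht.le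
      rw [hφ L hL]
      have hexp : ((q:ℝ)^α)^L = (q:ℝ) ^ (α * (L:ℝ)) := by
        rw [Real.rpow_mul hq0.le, Real.rpow_natCast]
      rw [hexp]
      apply Real.rpow_le_rpow_of_exponent_le hq1.le
      have hLm : (L:ℝ) ≤ ((L * m L : ℕ) : ℝ) := by
        have : L ≤ L * m L := Nat.le_mul_of_pos_right L (mpos L hL)
        exact_mod_cast this
      nlinarith
  have hSa0 : Tendsto (fun M => S M * a (M + 1)) atTop (𝓝 0) := by
    have hbnd : ∀ M, S M * a (M+1) ≤ ((M+1 : ℕ):ℝ) * ((q:ℝ)⁻¹)^(M+1) := by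
      intro M
      have hS : S M ≤ ((M+1:ℕ):ℝ) * (q:ℝ)^(M * m M) := by
        rw [hSdef]
        simp only
        calc ∑ n ∈ Finset.range (M+1), bb n
            ≤ ∑ _n ∈ Finset.range (M+1), (q:ℝ)^(M * m M) := by
              apply Finset.sum_le_sum
              intro n hn
              have hnM : n ≤ M := by
                have := Finset.mem_range.1 hn; omega
              rw [hbb]
              simp only
              calc (Real.exp (-(t * φ n)) - Real.exp (-(t * φ (n + 1)))) * (q:ℝ) ^ (n * m n)
                  ≤ 1 * (q:ℝ) ^ (n * m n) := by
                    apply mul_le_mul_of_nonneg_right ?_ (by positivity)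
                    have := expone n
                    have := (Real.exp_pos (-(t * φ (n+1)))).le
                    linarith
                _ = (q:ℝ) ^ (n * m n) := one_mul _
                _ ≤ (q:ℝ)^(M * m M) := pow_le_pow_right₀ hq1.le (nmmono n M hnM)
          _ = ((M+1:ℕ):ℝ) * (q:ℝ)^(M * m M) := by
              rw [Finset.sum_const, Finset.card_range, nsmul_eq_mul]
      have key : (q:ℝ)^(M * m M) * a (M+1) ≤ ((q:ℝ)⁻¹)^(M+1) := by
        rw [hadef]
        simp only
        rw [inv_pow]
        have hb : (0:ℝ) < (q:ℝ)^((M+1) * m (M+1)) := by positivity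
        have hc : (0:ℝ) < (q:ℝ)^(M+1) := by positivity
        rw [← div_eq_mul_inv, ← one_div, div_le_div_iff₀ hb hc, one_mul, ← pow_add]
        exact pow_le_pow_right₀ hq1.le (gap M)
      calc S M * a (M+1) ≤ (((M+1:ℕ):ℝ) * (q:ℝ)^(M * m M)) * a (M+1) :=
            mul_le_mul_of_nonneg_right hS (anonneg _)
        _ = ((M+1:ℕ):ℝ) * ((q:ℝ)^(M * m M) * a (M+1)) := by ring
        _ ≤ ((M+1:ℕ):ℝ) * ((q:ℝ)⁻¹)^(M+1) :=
            mul_le_mul_of_nonneg_left key (by positivity)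
    have hq1' : ‖(q:ℝ)⁻¹‖ < 1 := by
      rw [Real.norm_eq_abs, abs_of_nonneg (by positivity)]
      rw [inv_lt_one_iff₀]
      right; exact hq1
    have hgeo : Tendsto (fun n : ℕ => (n:ℝ) * ((q:ℝ)⁻¹)^n) atTop (𝓝 0) := by
      have h2 := (summable_pow_mul_geometric_of_norm_lt_one 1 hq1').tendsto_atTop_zero
      simpa [pow_one] using h2
    have hup : Tendsto (fun M : ℕ => ((M+1:ℕ):ℝ) * ((q:ℝ)⁻¹)^(M+1)) atTop (𝓝 0) := by
      have h3 := hgeo.comp (tendsto_add_atTop_nat 1)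
      apply h3.congr
      intro M
      simp only [Function.comp_apply]
    exact tendsto_of_tendsto_of_tendsto_of_le_of_le tendsto_const_nhds hup
      (fun M => mul_nonneg (Snonneg M) (anonneg _)) hbnd
  have hpsum : Tendsto (fun L => ∑ l ∈ Finset.range L, c l) atTop
      (𝓝 (Real.exp (-(t * φ N)))) := by
    have h1 : Tendsto (fun L => S (L-1) * a L) atTop (𝓝 0) := by
      have h2 := hSa0.comp (tendsto_sub_atTop_nat 1)
      apply h2.congr'
      filter_upwards [eventually_ge_atTop 1] with L hL
      simp only [Function.comp]
      rw [show L - 1 + 1 = L by omega]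
    have h2 : Tendsto
        (fun L => Real.exp (-(t * φ N)) - Real.exp (-(t * φ L)) - S (L-1) * a L) atTop
        (𝓝 (Real.exp (-(t * φ N)) - 0 - 0)) := (tendsto_const_nhds.sub hexp0).sub h1
    rw [sub_zero, sub_zero] at h2
    apply h2.congr'
    filter_upwards [eventually_ge_atTop N] with L hL
    exact (idB L hL).symm
  have hlim2 : Tendsto (fun L => ∫ z, θ.1 z * (g L z : ℂ) ∂μ) atTop
      (𝓝 ((Real.exp (-(t * φ N)) : ℝ) : ℂ)) := by
    simp_rw [intFL]
    exact (Complex.continuous_ofReal.tendsto _).comp hpsum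
  refine ⟨hint, ?_⟩
  have hfinal := tendsto_nhds_unique hDCT hlim2
  rw [hfinal, hφ N hN]
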